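/- Let (F^{α,a}) be a collection of ancestor vector potentials with unit A. Assign to the variable t^β_b the degree b − 1. Then for every α and every a ≥ 0, every monomial t^{β_1}_{b_1} ⋯ t^{β_n}_{b_n} occurring with nonzero coefficient in F^{α,a} satisfies Σ_{i=1}^n (b_i − 1) ≤ −a − 2; in particular every such monomial has n ≥ a + 2 factors. -/

import Mathlib

/-!
Common setup: formal power series in the variables `t^β_b` (β ∈ Fin N, b ∈ ℕ),
the descendant/ancestor vector potential equations of a (calibrated) flat F-manifold,
and the generalized Givental upper/lower triangular group actions, following
Arsie–Buryak–Lorenzoni–Rossi, "Semisimple flat F-manifolds in higher genus".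
-/

noncomputable section
open MvPowerSeries

/-- Index of the variable `t^β_b`. -/
abbrev Idx (N : ℕ) := Fin N × ℕ

/-- The ring of formal power series in the variables `t^β_b`. -/
abbrev PS (N : ℕ) := MvPowerSeries (Idx N) ℂ

variable {N : ℕ}

/-- Build a power series from its coefficient function. -/
def ofCoeff (f : (Idx N →₀ ℕ) → ℂ) : PS N := f

/-- The coefficient of a power series at a monomial. -/
def cf (m : Idx N →₀ ℕ) (F : PS N) : ℂ := MvPowerSeries.coeff (R := ℂ) m F

/-- The partial derivative `∂/∂t^β_b` (= `∂/∂q^β_b`) of a formal power series. -/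
def pd (v : Idx N) (F : PS N) : PS N :=
  ofCoeff fun m => ((m v + 1 : ℕ) : ℂ) * cf (m + Finsupp.single v 1) F

/-- The series `q^β_b = t^β_b − A^β δ_{b,1}`, for series centered at the point `p`
(i.e. written in the variables `X_{(β,b)} = t^β_b − p^β δ_{b,0}`):
`q^β_b = X_{(β,b)} + p^β δ_{b,0} − A^β δ_{b,1}`. -/
def qs (p A : Fin N → ℂ) (v : Idx N) : PS N :=
  X v + C (σ := Idx N) (R := ℂ) ((if v.2 = 0 then p v.1 else 0) - (if v.2 = 1 then A v.1 else 0))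

/-- Coefficientwise well-defined infinite sum `Σ_{β, b ≥ 0} X_{(β,b+1)} · G (β,b)`
(used in the string equation). -/
def stringX (G : Idx N → PS N) : PS N :=
  ofCoeff fun m =>
    ∑ v ∈ m.support.filter (fun v => 1 ≤ v.2),
      cf (m - Finsupp.single v 1) (G (v.1, v.2 - 1))

/-- Coefficientwise well-defined infinite sum `Σ_{β, b ≥ 0} X_{(β,b)} · G (β,b)`
(used in the dilaton equation). -/
def dilX (G : Idx N → PS N) : PS N :=
  ofCoeff fun m => ∑ v ∈ m.support, cf (m - Finsupp.single v 1) (G v)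

/-- `(−1)^k` as a complex number. -/
def sg (k : ℕ) : ℂ := if Even k then 1 else -1

/-- `(−1)^d` for an integer `d`. -/
def sgZ (d : ℤ) : ℂ := if Even d then 1 else -1

/-- The extension of the collection `F^{α,a}` to all `a ∈ ℤ` by the convention
`F^{α,a} := (−1)^{a+1} q^α_{−a−1}` for `a < 0`. -/
def FZ (p A : Fin N → ℂ) (F : ℕ → Fin N → PS N) (a : ℤ) (α : Fin N) : PS N :=
  if 0 ≤ a then F a.toNat α
  else C (σ := Idx N) (R := ℂ) (if Even a then -1 else 1) * qs p A (α, (-a - 1).toNat)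

/-- The descendant vector potential equations (string, dilaton, TRR, REL) for a collection
`F^{α,a}` of formal power series centered at `p`, with unit `A`.  All infinite sums over
`b ≥ 0` are the coefficientwise (well-defined) ones. -/
def IsDescendant (p A : Fin N → ℂ) (F : ℕ → Fin N → PS N) : Prop :=
  -- string equation: Σ_{b≥0} q^β_{b+1} ∂F^{α,a}/∂q^β_b = −F^{α,a−1}
  (∀ (a : ℤ) (α : Fin N),
      stringX (fun v => pd v (FZ p A F a α))
        - ∑ β, C (σ := Idx N) (R := ℂ) (A β) * pd (β, 0) (FZ p A F a α)
      = - FZ p A F (a - 1) α) ∧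
  -- dilaton equation: Σ_{b≥0} q^β_b ∂F^{α,a}/∂q^β_b = F^{α,a}
  (∀ (a : ℤ) (α : Fin N),
      dilX (fun v => pd v (FZ p A F a α))
        + ∑ β, C (σ := Idx N) (R := ℂ) (p β) * pd (β, 0) (FZ p A F a α)
        - ∑ β, C (σ := Idx N) (R := ℂ) (A β) * pd (β, 1) (FZ p A F a α)
      = FZ p A F a α) ∧
  -- topological recursion relation
  (∀ (b c : ℕ) (α β γ : Fin N),
      pd (β, b + 1) (pd (γ, c) (F 0 α))
      = ∑ μ, pd (β, b) (F 0 μ) * pd (μ, 0) (pd (γ, c) (F 0 α))) ∧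
  -- the relation controlling descendants
  (∀ (a b : ℕ) (α β : Fin N),
      pd (β, b) (F (a + 1) α) + pd (β, b + 1) (F a α)
      = ∑ μ, pd (μ, 0) (F a α) * pd (β, b) (F 0 μ))

/-- A collection of ancestor vector potentials: descendant vector potentials centered at `0`
all of whose first partial derivatives vanish at `t^*_* = 0`. -/
def IsAncestor (A : Fin N → ℂ) (F : ℕ → Fin N → PS N) : Prop :=
  IsDescendant 0 A F ∧
  ∀ (a : ℕ) (α : Fin N) (v : Idx N),
    MvPowerSeries.constantCoeff (σ := Idx N) (R := ℂ) (pd v (F a α)) = 0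

/-- The monomial substitution: for a monomial `m`, the product `∏_v (P v)^{m v}`. -/
def monSubst (P : Idx N → PS N) (m : Idx N →₀ ℕ) : PS N :=
  m.prod fun v k => P v ^ k


namespace Stmt16

variable {N : ℕ}

lemma cf_pd (v : Idx N) (P : PS N) (m : Idx N →₀ ℕ) :
    cf m (pd v P) = ((m v + 1 : ℕ) : ℂ) * cf (m + Finsupp.single v 1) P := rfl

lemma cf_dilX (G : Idx N → PS N) (m : Idx N →₀ ℕ) :
    cf m (dilX G) = ∑ v ∈ m.support, cf (m - Finsupp.single v 1) (G v) := rfl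

lemma cf_mul (P Q : PS N) (m : Idx N →₀ ℕ) :
    cf m (P * Q) = ∑ p ∈ Finset.HasAntidiagonal.antidiagonal m, cf p.1 P * cf p.2 Q :=
  MvPowerSeries.coeff_mul m P Q

lemma cf_add (m : Idx N →₀ ℕ) (P Q : PS N) : cf m (P + Q) = cf m P + cf m Q :=
  map_add (MvPowerSeries.coeff (R := ℂ) m) P Q

lemma cf_sub (m : Idx N →₀ ℕ) (P Q : PS N) : cf m (P - Q) = cf m P - cf m Q :=
  map_sub (MvPowerSeries.coeff (R := ℂ) m) P Q

lemma cf_sum {ι : Type*} (m : Idx N →₀ ℕ) (s : Finset ι) (f : ι → PS N) :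
    cf m (∑ i ∈ s, f i) = ∑ i ∈ s, cf m (f i) :=
  map_sum (MvPowerSeries.coeff (R := ℂ) m) f s

lemma cf_C_mul (m : Idx N →₀ ℕ) (x : ℂ) (P : PS N) :
    cf m (C (σ := Idx N) (R := ℂ) x * P) = x * cf m P :=
  MvPowerSeries.coeff_C_mul m P x

/-- The degree of a monomial, where `t^β_b` has degree `b - 1`. -/
def dg (m : Idx N →₀ ℕ) : ℤ := m.sum fun v k => (k : ℤ) * ((v.2 : ℤ) - 1)

/-- The size (number of factors) of a monomial. -/
def nsz (m : Idx N →₀ ℕ) : ℕ := m.sum fun _ k => k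

lemma dg_eq (m : Idx N →₀ ℕ) : dg m = ∑ v ∈ m.support, (m v : ℤ) * ((v.2 : ℤ) - 1) := rfl

lemma dg_add (m n : Idx N →₀ ℕ) : dg (m + n) = dg m + dg n :=
  Finsupp.sum_add_index' (by simp) (by intro a b c; push_cast; ring)

lemma nsz_add (m n : Idx N →₀ ℕ) : nsz (m + n) = nsz m + nsz n :=
  Finsupp.sum_add_index' (by simp) (by intros; rfl)

lemma dg_single (v : Idx N) : dg (Finsupp.single v 1) = (v.2 : ℤ) - 1 := by
  simp [dg, Finsupp.sum_single_index]

lemma nsz_single (v : Idx N) : nsz (Finsupp.single v 1) = 1 := by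
  simp [nsz, Finsupp.sum_single_index]

lemma nsz_eq (m : Idx N →₀ ℕ) : (nsz m : ℤ) = ∑ v ∈ m.support, (m v : ℤ) := by
  rw [nsz, Finsupp.sum]; push_cast; rfl

lemma neg_nsz_le_dg (m : Idx N →₀ ℕ) : -(nsz m : ℤ) ≤ dg m := by
  have h : dg m + (nsz m : ℤ) = ∑ v ∈ m.support, (m v : ℤ) * (v.2 : ℤ) := by
    rw [dg_eq, nsz_eq, ← Finset.sum_add_distrib]
    exact Finset.sum_congr rfl (by intros; ring)
  have h2 : 0 ≤ ∑ v ∈ m.support, (m v : ℤ) * (v.2 : ℤ) :=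
    Finset.sum_nonneg fun v _ => by positivity
  linarith

lemma dg_of_zero {m : Idx N →₀ ℕ} (h : ∀ u ∈ m.support, u.2 = 0) :
    dg m = -(nsz m : ℤ) := by
  rw [dg_eq, nsz_eq, ← Finset.sum_neg_distrib]
  refine Finset.sum_congr rfl fun v hv => ?_
  rw [h v hv]; push_cast; ring

lemma exists_decomp {m : Idx N →₀ ℕ} {v : Idx N} (h : v ∈ m.support) :
    ∃ m', m = m' + Finsupp.single v 1 := by
  refine ⟨m - Finsupp.single v 1, ?_⟩
  have hv : m v ≠ 0 := Finsupp.mem_support_iff.mp h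
  ext u
  by_cases hu : u = v
  · subst hu
    have hs : (Finsupp.single u 1 : Idx N →₀ ℕ) u = 1 := Finsupp.single_eq_same
    simp only [Finsupp.add_apply, Finsupp.tsub_apply, hs]
    omega
  · simp [Finsupp.add_apply, Finsupp.tsub_apply, Finsupp.single_apply, Ne.symm hu]

lemma nsz_pos {m : Idx N →₀ ℕ} (h : m ≠ 0) : 1 ≤ nsz m := by
  obtain ⟨v, hv⟩ := Finsupp.support_nonempty_iff.mpr h
  obtain ⟨m', rfl⟩ := exists_decomp hv
  rw [nsz_add, nsz_single]; omega

lemma natcast_succ_ne (k : ℕ) : ((k + 1 : ℕ) : ℂ) ≠ 0 := by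
  exact_mod_cast Nat.succ_ne_zero k

/-- The key vanishing lemma: every monomial of `F^{α,a}` of degree `≥ -a-1` has
vanishing coefficient. -/
lemma key {A : Fin N → ℂ} {F : ℕ → Fin N → PS N} (hF : IsAncestor A F) :
    ∀ (a : ℕ) (α : Fin N) (m : Idx N →₀ ℕ), -(a : ℤ) - 1 ≤ dg m → cf m (F a α) = 0 := by
  obtain ⟨⟨hstr, hdil, htrr, hrel⟩, hanc⟩ := hF
  -- linear coefficients vanish
  have hlin : ∀ (a : ℕ) (α : Fin N) (v : Idx N), cf (Finsupp.single v 1) (F a α) = 0 := by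
    intro a α v
    have h : cf 0 (pd v (F a α)) = 0 := by
      rw [cf, MvPowerSeries.coeff_zero_eq_constantCoeff_apply]; exact hanc a α v
    rw [cf_pd] at h
    simpa using h
  -- constant coefficients vanish
  have hconst : ∀ (a : ℕ) (α : Fin N), cf 0 (F a α) = 0 := by
    intro a α
    have hFZ : FZ 0 A F (a : ℤ) α = F a α := by
      simp [FZ, Int.toNat_natCast, Int.natCast_nonneg]
    have h := congrArg (cf 0) (hdil (a : ℤ) α)
    simp only [hFZ] at h
    rw [cf_sub, cf_add, cf_dilX, cf_sum, cf_sum] at h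
    simp only [cf_C_mul, Pi.zero_apply, zero_mul, Finset.sum_const_zero, cf_pd,
      Finsupp.coe_zero, zero_add, Nat.cast_one, one_mul, hlin,
      mul_zero, Finsupp.support_zero, Finset.sum_empty] at h
    simpa using h.symm
  -- base case a = 0
  have hbase : ∀ (α : Fin N) (m : Idx N →₀ ℕ), -1 ≤ dg m → cf m (F 0 α) = 0 := by
    suffices H : ∀ (n : ℕ) (α : Fin N) (m : Idx N →₀ ℕ), nsz m = n → -1 ≤ dg m →
        cf m (F 0 α) = 0 by
      intro α m hm; exact H (nsz m) α m rfl hm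
    intro n
    induction n using Nat.strong_induction_on with
    | _ n IH =>
      intro α m hmn hdg
      rcases eq_or_ne m 0 with rfl | hm0
      · exact hconst 0 α
      obtain ⟨v0, hv0⟩ := Finsupp.support_nonempty_iff.mpr hm0
      obtain ⟨m1, hm1⟩ := exists_decomp hv0
      rcases eq_or_ne m1 0 with rfl | hm10
      · rw [hm1, zero_add]; exact hlin 0 α v0
      have hn2 : 2 ≤ n := by
        have h1 := nsz_pos hm10
        have h2 : nsz m = nsz m1 + 1 := by rw [hm1, nsz_add, nsz_single]
        omega
      by_cases hpos : ∃ u ∈ m.support, 1 ≤ u.2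
      · -- TRR case
        obtain ⟨v, hv, hv2⟩ := hpos
        obtain ⟨b, hb⟩ : ∃ b, v.2 = b + 1 := ⟨v.2 - 1, by omega⟩
        obtain ⟨m', hm'⟩ := exists_decomp hv
        have hm'0 : m' ≠ 0 := by
          intro h
          have h1 : nsz m = 1 := by rw [hm', h, zero_add, nsz_single]
          omega
        obtain ⟨w, hw⟩ := Finsupp.support_nonempty_iff.mpr hm'0
        obtain ⟨m'', hm''⟩ := exists_decomp hw
        have hvv : ((v.1, b + 1) : Idx N) = v := by rw [← hb]
        have hmM : m'' + Finsupp.single (v.1, b + 1) 1 + Finsupp.single (w.1, w.2) 1 = m := by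
          rw [hvv, hm', hm'']; exact add_right_comm _ _ _
        have hnm : nsz m = nsz m'' + 2 := by
          rw [hm', hm'', nsz_add, nsz_add, nsz_single, nsz_single]
        have hdm : dg m = dg m'' + ((w.2 : ℤ) - 1) + ((b : ℤ) + 1 - 1) := by
          rw [hm', hm'', dg_add, dg_add, dg_single, dg_single, hb]; push_cast; ring
        -- the right-hand side of TRR vanishes
        have hR : cf m'' (∑ μ, pd (v.1, b) (F 0 μ) * pd (μ, 0) (pd (w.1, w.2) (F 0 α))) = 0 := by
          rw [cf_sum]
          refine Finset.sum_eq_zero fun μ _ => ?_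
          rw [cf_mul]
          refine Finset.sum_eq_zero fun p hp => ?_
          rw [Finset.HasAntidiagonal.mem_antidiagonal] at hp
          rw [cf_pd, cf_pd, cf_pd]
          have hsn : nsz p.1 + nsz p.2 = nsz m'' := by rw [← nsz_add, hp]
          have hsd : dg p.1 + dg p.2 = dg m'' := by rw [← dg_add, hp]
          have hd1 : dg (p.1 + Finsupp.single ((v.1, b) : Idx N) 1) = dg p.1 + ((b : ℤ) - 1) := by
            rw [dg_add, dg_single]
          have hd2 : dg (p.2 + Finsupp.single ((μ, 0) : Idx N) 1 + Finsupp.single (w.1, w.2) 1)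
              = dg p.2 + (-1) + ((w.2 : ℤ) - 1) := by
            rw [dg_add, dg_add, dg_single, dg_single]; push_cast; ring
          have hor : cf (p.1 + Finsupp.single ((v.1, b) : Idx N) 1) (F 0 μ) = 0 ∨
              cf (p.2 + Finsupp.single ((μ, 0) : Idx N) 1 + Finsupp.single (w.1, w.2) 1)
                (F 0 α) = 0 := by
            rcases eq_or_ne p.1 0 with h0 | h0
            · left; rw [h0, zero_add]; exact hlin 0 μ (v.1, b)
            · have hp1 : 1 ≤ nsz p.1 := nsz_pos h0
              by_cases hc : -1 ≤ dg (p.1 + Finsupp.single ((v.1, b) : Idx N) 1)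
              · left
                refine IH (nsz (p.1 + Finsupp.single ((v.1, b) : Idx N) 1)) ?_ μ _ rfl hc
                rw [nsz_add, nsz_single]; omega
              · right
                refine IH (nsz (p.2 + Finsupp.single ((μ, 0) : Idx N) 1
                    + Finsupp.single (w.1, w.2) 1)) ?_ α _ rfl ?_
                · rw [nsz_add, nsz_add, nsz_single, nsz_single]; omega
                · omega
          rcases hor with h | h <;> rw [h] <;> ring
        have h := congrArg (cf m'') (htrr b w.2 α v.1 w.1)
        rw [cf_pd, cf_pd, hmM, hR] at h
        have c1 := natcast_succ_ne (m'' (v.1, b + 1))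
        have c2 := natcast_succ_ne (((m'' + Finsupp.single ((v.1, b + 1) : Idx N) 1 : Idx N →₀ ℕ)) (w.1, w.2))
        simp only [mul_eq_zero] at h
        tauto
      · -- all indices are 0 : contradiction with the degree bound
        push_neg at hpos
        have hz : ∀ u ∈ m.support, u.2 = 0 := fun u hu => by have := hpos u hu; omega
        have hzz := dg_of_zero hz
        omega
  -- induction on a
  intro a
  induction a with
  | zero =>
    intro α m hm
    refine hbase α m ?_
    simpa using hm
  | succ a IHa =>
    intro α m hdg
    rcases eq_or_ne m 0 with rfl | hm0
    · exact hconst _ _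
    obtain ⟨v, hv⟩ := Finsupp.support_nonempty_iff.mpr hm0
    obtain ⟨m', hm'⟩ := exists_decomp hv
    have hdm : dg m = dg m' + ((v.2 : ℤ) - 1) := by rw [hm', dg_add, dg_single]
    push_cast at hdg
    have hR : cf m' (∑ μ, pd (μ, 0) (F a α) * pd (v.1, v.2) (F 0 μ)) = 0 := by
      rw [cf_sum]
      refine Finset.sum_eq_zero fun μ _ => ?_
      rw [cf_mul]
      refine Finset.sum_eq_zero fun p hp => ?_
      rw [Finset.HasAntidiagonal.mem_antidiagonal] at hp
      rw [cf_pd, cf_pd]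
      have hsd : dg p.1 + dg p.2 = dg m' := by rw [← dg_add, hp]
      have hd1 : dg (p.1 + Finsupp.single ((μ, 0) : Idx N) 1) = dg p.1 + (-1) := by
        rw [dg_add, dg_single]; push_cast; ring
      have hd2 : dg (p.2 + Finsupp.single ((v.1, v.2) : Idx N) 1)
          = dg p.2 + ((v.2 : ℤ) - 1) := by
        rw [dg_add, dg_single]
      have hor : cf (p.1 + Finsupp.single ((μ, 0) : Idx N) 1) (F a α) = 0 ∨
          cf (p.2 + Finsupp.single ((v.1, v.2) : Idx N) 1) (F 0 μ) = 0 := by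
        by_cases hc : -(a : ℤ) - 1 ≤ dg (p.1 + Finsupp.single ((μ, 0) : Idx N) 1)
        · left; exact IHa α _ hc
        · right
          refine hbase μ _ ?_
          omega
      rcases hor with h | h <;> rw [h] <;> ring
    have hT2 : cf (m' + Finsupp.single ((v.1, v.2 + 1) : Idx N) 1) (F a α) = 0 := by
      refine IHa α _ ?_
      have hd : dg (m' + Finsupp.single ((v.1, v.2 + 1) : Idx N) 1)
          = dg m' + (((v.2 : ℤ) + 1) - 1) := by
        rw [dg_add, dg_single]; push_cast; ring
      omega
    have h := congrArg (cf m') (hrel a v.2 α v.1)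
    rw [cf_add, cf_pd, cf_pd, hT2, mul_zero, add_zero, hR] at h
    have hMm : m' + Finsupp.single ((v.1, v.2) : Idx N) 1 = m := hm'.symm
    rw [hMm] at h
    exact (mul_eq_zero.mp h).resolve_left (natcast_succ_ne _)

end Stmt16

/-- Assigning to the variable `t^β_b` the degree `b − 1`, every monomial
occurring with nonzero coefficient in an ancestor vector potential `F^{α,a}` has degree
at most `−a − 2`; in particular it has at least `a + 2` factors. -/
theorem statement16 {N : ℕ} (A : Fin N → ℂ) (F : ℕ → Fin N → PS N)
    (hF : IsAncestor A F) :
    ∀ (a : ℕ) (α : Fin N) (m : Idx N →₀ ℕ), cf m (F a α) ≠ 0 →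
      (∑ v ∈ m.support, (m v : ℤ) * ((v.2 : ℤ) - 1)) ≤ -(a : ℤ) - 2 ∧
      (a : ℤ) + 2 ≤ ∑ v ∈ m.support, (m v : ℤ) := by
  intro a α m hm
  have hk : ¬ (-(a : ℤ) - 1 ≤ Stmt16.dg m) := fun h => hm (Stmt16.key hF a α m h)
  have h1 : (∑ v ∈ m.support, (m v : ℤ) * ((v.2 : ℤ) - 1)) = Stmt16.dg m := (Stmt16.dg_eq m).symm
  have h2 : (∑ v ∈ m.support, (m v : ℤ)) = (Stmt16.nsz m : ℤ) := (Stmt16.nsz_eq m).symm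
  have h3 := Stmt16.neg_nsz_le_dg m
  rw [h1, h2]
  omega

end
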